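/- Let T > 0, γ > 0, ι ≥ 0, and ρ, v ≥ 0 with κ := ι + ρv > 0. Define a₂(t) = (1/(γκ))·(1 − e^{−2κ(T−t)}). Let a₂⁰ : [0,T] → ℝ be continuous and, for each n ≥ 0, let a₂^{n+1} : [0,T] → ℝ be differentiable with (a₂^{n+1})′(t) = 2ι·a₂^{n+1}(t) + 2ρv·a₂ⁿ(t) − 2/γ for all t ∈ [0,T] and a₂^{n+1}(T) = 0. Then a₂ⁿ converges to a₂ uniformly on [0,T]; moreover sup_{t∈[0,T]} |a₂ⁿ(t) − a₂(t)| ≤ (2ρvT)ⁿ/n! · sup_{t∈[0,T]} |a₂⁰(t) − a₂(t)|. -/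

import Mathlib

set_option maxHeartbeats 1000000

/-- Theorem 4.1(ii), second-order coefficient: the policy-iteration coefficients
`a₂ⁿ` converge uniformly on `[0,T]` to the equilibrium coefficient `a₂`, with
factorial rate `(2ρvT)ⁿ/n!` times the sup of the initial error. -/
theorem stmt_16 (T γ ι ρ v : ℝ) (hT : 0 < T) (hγ : 0 < γ) (hι : 0 ≤ ι)
    (hρ : 0 ≤ ρ) (hv : 0 ≤ v) (hκ : 0 < ι + ρ * v)
    (a₂seq : ℕ → ℝ → ℝ)
    (hcont : ContinuousOn (a₂seq 0) (Set.Icc 0 T))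
    (hode : ∀ n, ∀ t ∈ Set.Icc (0 : ℝ) T,
      HasDerivAt (a₂seq (n + 1))
        (2 * ι * a₂seq (n + 1) t + 2 * ρ * v * a₂seq n t - 2 / γ) t)
    (hterm : ∀ n, a₂seq (n + 1) T = 0) :
    let κ : ℝ := ι + ρ * v
    let a₂ : ℝ → ℝ := fun t => (1 / (γ * κ)) * (1 - Real.exp (-2 * κ * (T - t)))
    TendstoUniformlyOn a₂seq a₂ Filter.atTop (Set.Icc 0 T) ∧
    ∀ n, ∀ t ∈ Set.Icc (0 : ℝ) T,
      |a₂seq n t - a₂ t| ≤ (2 * ρ * v * T) ^ n / (n.factorial : ℝ) *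
        sSup ((fun t => |a₂seq 0 t - a₂ t|) '' Set.Icc 0 T) := by
  intro κ a₂
  have hκ0 : (0:ℝ) < κ := hκ
  have hγκ : γ * κ ≠ 0 := by positivity
  set M := sSup ((fun t => |a₂seq 0 t - a₂ t|) '' Set.Icc 0 T) with hMdef
  -- derivative of the limit a₂
  have hda₂ : ∀ t : ℝ, HasDerivAt a₂ (2 * ι * a₂ t + 2 * ρ * v * a₂ t - 2 / γ) t := by
    intro t
    have h1 : HasDerivAt (fun s : ℝ => -2 * κ * (T - s)) (2 * κ) t := by
      have := ((hasDerivAt_id t).const_sub T).const_mul (-2 * κ)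
      exact this.congr_deriv (by ring)
    have h2 : HasDerivAt (fun s : ℝ => Real.exp (-2 * κ * (T - s)))
        (Real.exp (-2 * κ * (T - t)) * (2 * κ)) t := h1.exp
    have h3 : HasDerivAt a₂
        ((1 / (γ * κ)) * (0 - Real.exp (-2 * κ * (T - t)) * (2 * κ))) t :=
      ((hasDerivAt_const t (1:ℝ)).sub h2).const_mul _
    convert h3 using 1
    show 2 * ι * ((1 / (γ * κ)) * (1 - Real.exp (-2 * κ * (T - t))))
        + 2 * ρ * v * ((1 / (γ * κ)) * (1 - Real.exp (-2 * κ * (T - t)))) - 2 / γ = _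
    have hκι : κ = ι + ρ * v := rfl
    field_simp
    rw [hκι]
    ring
  have ha₂T : a₂ T = 0 := by
    show (1 / (γ * κ)) * (1 - Real.exp (-2 * κ * (T - T))) = 0
    simp
  -- derivative of error terms
  have hde : ∀ n, ∀ t ∈ Set.Icc (0:ℝ) T,
      HasDerivAt (fun s => a₂seq (n+1) s - a₂ s)
        (2 * ι * (a₂seq (n+1) t - a₂ t) + 2 * ρ * v * (a₂seq n t - a₂ t)) t := by
    intro n t ht
    have := (hode n t ht).sub (hda₂ t)
    exact this.congr_deriv (by ring)
  -- continuity of error terms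
  have hconta₂ : Continuous a₂ := by
    show Continuous fun t => (1 / (γ * κ)) * (1 - Real.exp (-2 * κ * (T - t)))
    continuity
  have hcontn : ∀ n, ContinuousOn (fun t => a₂seq n t - a₂ t) (Set.Icc 0 T) := by
    intro n
    cases n with
    | zero => exact hcont.sub hconta₂.continuousOn
    | succ n =>
      intro t ht
      exact ((hde n t ht).continuousAt).continuousWithinAt
  have hbdd : BddAbove ((fun t => |a₂seq 0 t - a₂ t|) '' Set.Icc 0 T) :=
    isCompact_Icc.bddAbove_image (hcontn 0).abs
  have hM0 : 0 ≤ M := by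
    have h0 : (0:ℝ) ∈ Set.Icc (0:ℝ) T := ⟨le_rfl, hT.le⟩
    calc (0:ℝ) ≤ |a₂seq 0 0 - a₂ 0| := abs_nonneg _
      _ ≤ M := le_csSup hbdd (Set.mem_image_of_mem _ h0)
  -- key inductive estimate
  have key : ∀ n, ∀ t ∈ Set.Icc (0:ℝ) T,
      |a₂seq n t - a₂ t| ≤ M * (2*ρ*v)^n * (T - t)^n / n.factorial := by
    intro n
    induction n with
    | zero =>
      intro t ht
      simpa using le_csSup hbdd (Set.mem_image_of_mem _ ht)
    | succ n ih =>
      intro t ht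
      have htT : t ≤ T := ht.2
      have hsub : Set.Icc t T ⊆ Set.Icc 0 T := Set.Icc_subset_Icc ht.1 le_rfl
      set f : ℝ → ℝ := fun s => Real.exp (-2*ι*s) * (a₂seq (n+1) s - a₂ s) with hfdef
      have hderivf : ∀ s ∈ Set.Icc (0:ℝ) T,
          HasDerivAt f (Real.exp (-2*ι*s) * (2*ρ*v*(a₂seq n s - a₂ s))) s := by
        intro s hs
        have hexp : HasDerivAt (fun s : ℝ => Real.exp (-2*ι*s))
            (Real.exp (-2*ι*s) * (-2*ι)) s := by
          have := ((hasDerivAt_id s).const_mul (-2*ι)).exp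
          simpa using this
        have := hexp.mul (hde n s hs)
        exact this.congr_deriv (by ring)
      have hint : IntervalIntegrable
          (fun s => Real.exp (-2*ι*s) * (2*ρ*v*(a₂seq n s - a₂ s))) MeasureTheory.volume t T := by
        apply ContinuousOn.intervalIntegrable
        rw [Set.uIcc_of_le htT]
        have hc1 : Continuous fun s : ℝ => Real.exp (-2*ι*s) := by fun_prop
        exact hc1.continuousOn.mul (continuousOn_const.mul ((hcontn n).mono hsub))
      have hFTC := intervalIntegral.integral_eq_sub_of_hasDerivAt
        (f := f) (a := t) (b := T)
        (fun s hs => hderivf s (hsub (by rwa [Set.uIcc_of_le htT] at hs))) hint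
      have hfT : f T = 0 := by simp [hfdef, hterm n, ha₂T]
      have hft : f t = -∫ s in t..T, Real.exp (-2*ι*s) * (2*ρ*v*(a₂seq n s - a₂ s)) := by
        rw [hFTC, hfT]; ring
      -- bound the integral
      set C : ℝ := Real.exp (-2*ι*t) * (2*ρ*v) * (M * (2*ρ*v)^n / n.factorial) with hCdef
      have hC0 : 0 ≤ C := by positivity
      have hbound : |f t| ≤ C * ((T - t)^(n+1) / (n+1)) := by
        rw [hft, abs_neg]
        have hnorm : ‖∫ s in t..T, Real.exp (-2*ι*s) * (2*ρ*v*(a₂seq n s - a₂ s))‖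
            ≤ |∫ s in t..T, C * (T - s)^n| := by
          apply intervalIntegral.norm_integral_le_abs_of_norm_le
          · refine MeasureTheory.ae_restrict_of_forall_mem measurableSet_uIoc ?_
            intro s hs
            rw [Set.uIoc_of_le htT] at hs
            have hsmem : s ∈ Set.Icc (0:ℝ) T := ⟨le_trans ht.1 hs.1.le, hs.2⟩
            rw [Real.norm_eq_abs, abs_mul, abs_mul,
              abs_of_pos (Real.exp_pos _), abs_of_nonneg (by positivity : (0:ℝ) ≤ 2*ρ*v)]
            have hexple : Real.exp (-2*ι*s) ≤ Real.exp (-2*ι*t) := by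
              apply Real.exp_le_exp.2
              nlinarith [hs.1.le]
            calc Real.exp (-2*ι*s) * (2*ρ*v * |a₂seq n s - a₂ s|)
                ≤ Real.exp (-2*ι*t) * (2*ρ*v * (M * (2*ρ*v)^n * (T - s)^n / n.factorial)) := by
                  apply mul_le_mul hexple ?_ (by positivity) (Real.exp_pos _).le
                  exact mul_le_mul_of_nonneg_left (ih s hsmem) (by positivity)
              _ = C * (T - s)^n := by rw [hCdef]; ring
          · apply ContinuousOn.intervalIntegrable
            exact (continuousOn_const.mul ((continuousOn_const.sub continuousOn_id).pow n))
        have hval : (∫ s in t..T, C * (T - s)^n) = C * ((T - t)^(n+1) / (n+1)) := by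
          rw [intervalIntegral.integral_const_mul]
          congr 1
          rw [intervalIntegral.integral_comp_sub_left (fun u => u ^ n) T]
          simp [integral_pow]
        rw [hval] at hnorm
        calc |∫ s in t..T, Real.exp (-2*ι*s) * (2*ρ*v*(a₂seq n s - a₂ s))|
            ≤ |C * ((T - t)^(n+1) / (n+1))| := hnorm
          _ = C * ((T - t)^(n+1) / (n+1)) := by
              rw [abs_of_nonneg]
              have : (0:ℝ) ≤ T - t := by linarith
              positivity
      -- recover the bound on the error
      have hfactor : |a₂seq (n+1) t - a₂ t| = Real.exp (2*ι*t) * |f t| := by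
        rw [hfdef]
        simp only [abs_mul, abs_of_pos (Real.exp_pos _)]
        rw [← mul_assoc, ← Real.exp_add]
        norm_num
      rw [hfactor]
      have hee : Real.exp (2*ι*t) * Real.exp (-2*ι*t) = 1 := by
        rw [← Real.exp_add]; norm_num
      calc Real.exp (2*ι*t) * |f t| ≤ Real.exp (2*ι*t) * (C * ((T - t)^(n+1) / (n+1))) := by
            gcongr
        _ = (Real.exp (2*ι*t) * Real.exp (-2*ι*t)) *
              ((2*ρ*v) * (M * (2*ρ*v)^n / n.factorial) * ((T - t)^(n+1) / (n+1))) := by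
            rw [hCdef]; ring
        _ = M * (2*ρ*v)^(n+1) * (T - t)^(n+1) / (n+1).factorial := by
            rw [hee, Nat.factorial_succ]
            push_cast
            have hn : ((n:ℝ) + 1) ≠ 0 := by positivity
            have hfn : ((n.factorial:ℝ)) ≠ 0 := by positivity
            field_simp
            ring
  -- final pointwise bound with Tⁿ
  have bound2 : ∀ n, ∀ t ∈ Set.Icc (0:ℝ) T,
      |a₂seq n t - a₂ t| ≤ (2*ρ*v*T)^n / n.factorial * M := by
    intro n t ht
    calc |a₂seq n t - a₂ t| ≤ M * (2*ρ*v)^n * (T - t)^n / n.factorial := key n t ht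
      _ ≤ M * (2*ρ*v)^n * T^n / n.factorial := by
          gcongr
          · linarith [ht.1, ht.2]
          · linarith [ht.1, ht.2]
      _ = (2*ρ*v*T)^n / n.factorial * M := by rw [mul_pow]; ring
  refine ⟨?_, bound2⟩
  rw [Metric.tendstoUniformlyOn_iff]
  intro ε hε
  have htend : Filter.Tendsto (fun n : ℕ => (2*ρ*v*T)^n / n.factorial * M)
      Filter.atTop (nhds 0) := by
    have := (FloorSemiring.tendsto_pow_div_factorial_atTop (2*ρ*v*T)).mul_const M
    simpa using this
  filter_upwards [htend.eventually (gt_mem_nhds hε)] with n hn t ht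
  rw [dist_comm, Real.dist_eq]
  exact lt_of_le_of_lt (bound2 n t ht) hn
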